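/- Let (A,*) be an associative algebra over a field of characteristic zero and let R₁, R₂ : A → A be commuting Rota-Baxter operators of weight zero, i.e. R₁R₂ = R₂R₁ and Rᵢ(x)*Rᵢ(y) = Rᵢ(Rᵢ(x)*y + x*Rᵢ(y)) for i = 1,2 and all x,y ∈ A. Then the four products x↘y = R₁R₂(x)*y, x↗y = R₁(x)*R₂(y), x↙y = R₂(x)*R₁(y), x↖y = x*R₁R₂(y) make A a quadri-algebra. -/
import Mathlib


open LinearMap

/-- Quadri-algebra axioms for the four products ↘ (`dse`), ↗ (`dne`), ↖ (`dnw`), ↙ (`dsw`). -/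
def IsQuadri {K A : Type*} [Field K] [AddCommGroup A] [Module K A]
    (dse dne dnw dsw : A →ₗ[K] A →ₗ[K] A) : Prop :=
  (∀ x y z : A, dnw (dnw x y) z = dnw x (dse y z + dne y z + dnw y z + dsw y z)) ∧
  (∀ x y z : A, dnw (dne x y) z = dne x (dnw y z + dsw y z)) ∧
  (∀ x y z : A, dne (dne x y + dnw x y) z = dne x (dne y z + dse y z)) ∧
  (∀ x y z : A, dnw (dsw x y) z = dsw x (dne y z + dnw y z)) ∧
  (∀ x y z : A, dnw (dse x y) z = dse x (dnw y z)) ∧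
  (∀ x y z : A, dne (dse x y + dsw x y) z = dse x (dne y z)) ∧
  (∀ x y z : A, dsw (dnw x y + dsw x y) z = dsw x (dse y z + dsw y z)) ∧
  (∀ x y z : A, dsw (dne x y + dse x y) z = dse x (dsw y z)) ∧
  (∀ x y z : A, dse (dse x y + dne x y + dnw x y + dsw x y) z = dse x (dse y z))

/-- Corollary 3.4.9: a pair of commuting Rota-Baxter operators `R₁`, `R₂` (of weight
zero) on an associative algebra `(A, *)` induces a quadri-algebra structure on `A` by
`x↘y = R₁R₂(x)*y`, `x↗y = R₁(x)*R₂(y)`, `x↙y = R₂(x)*R₁(y)`, `x↖y = x*R₁R₂(y)`. -/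
theorem commuting_rotaBaxter_pair_gives_quadri
    {K A : Type*} [Field K] [CharZero K] [AddCommGroup A] [Module K A]
    (mul : A →ₗ[K] A →ₗ[K] A)
    (hassoc : ∀ x y z : A, mul (mul x y) z = mul x (mul y z))
    (R₁ R₂ : A →ₗ[K] A)
    (hcomm : R₁ ∘ₗ R₂ = R₂ ∘ₗ R₁)
    (hRB1 : ∀ x y : A, mul (R₁ x) (R₁ y) = R₁ (mul (R₁ x) y + mul x (R₁ y)))
    (hRB2 : ∀ x y : A, mul (R₂ x) (R₂ y) = R₂ (mul (R₂ x) y + mul x (R₂ y))) :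
    IsQuadri (mul ∘ₗ (R₁ ∘ₗ R₂)) ((mul ∘ₗ R₁).compl₂ R₂) (mul.compl₂ (R₁ ∘ₗ R₂))
      ((mul ∘ₗ R₂).compl₂ R₁) := by
  have hc : ∀ x : A, R₁ (R₂ x) = R₂ (R₁ x) := fun x => LinearMap.congr_fun hcomm x
  have lem : ∀ a b : A, mul (R₁ (R₂ a)) (R₁ (R₂ b)) =
      R₁ (R₂ (mul (R₁ (R₂ a)) b + mul (R₁ a) (R₂ b) + mul a (R₁ (R₂ b)) + mul (R₂ a) (R₁ b))) := by
    intro a b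
    rw [hRB1 (R₂ a) (R₂ b), hc a, hRB2 (R₁ a) b, hc b, hRB2 a (R₁ b), ← map_add R₂]
    simp only [hc]
    congr 2
    abel
  refine ⟨?_, ?_, ?_, ?_, ?_, ?_, ?_, ?_, ?_⟩ <;> intro x y z <;>
    simp only [LinearMap.coe_comp, Function.comp_apply, LinearMap.compl₂_apply,
      LinearMap.comp_apply]
  · rw [hassoc, lem y z]
  · rw [hassoc, hc z, hRB2 y (R₁ z)]
    congr 2
    abel
  · rw [← hRB1 x (R₂ y), hassoc, hc y, hRB2 (R₁ y) z]
    congr 2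
    abel
  · rw [hassoc, hRB1 y (R₂ z)]
  · rw [hassoc]
  · rw [← hRB1 (R₂ x) y, hassoc]
  · rw [hc y, add_comm (mul x (R₂ (R₁ y))), ← hRB2 x (R₁ y), hassoc, ← hc y, hRB1 (R₂ y) z]
  · rw [hc x, add_comm (mul (R₁ x) (R₂ y)), ← hRB2 (R₁ x) y, hassoc]
  · rw [← lem x y, hassoc]
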